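/- Let R > 0 and let u be a C² convex solution of the translating soliton equation on the strip S_R := {(x₁,x₂) ∈ ℝ² : |x₁| < R} such that, for each fixed x₂, u(x₁, x₂) → +∞ as |x₁| → R. Then the mean curvature of the graph satisfies H(x₁,x₂) := 1/√(1 + |∇u(x₁,x₂)|²) ≤ R − |x₁| for every (x₁,x₂) ∈ S_R. -/

import Mathlib

open Real Filter

noncomputable def pd1 (f : ℝ × ℝ → ℝ) (p : ℝ × ℝ) : ℝ := fderiv ℝ f p (1, 0)

noncomputable def pd2 (f : ℝ × ℝ → ℝ) (p : ℝ × ℝ) : ℝ := fderiv ℝ f p (0, 1)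

/-- The translating soliton equation in nondivergence form. -/
def IsSolitonAt (u : ℝ × ℝ → ℝ) (p : ℝ × ℝ) : Prop :=
  (1 + (pd2 u p) ^ 2) * pd1 (pd1 u) p
    - 2 * pd1 u p * pd2 u p * pd2 (pd1 u) p
    + (1 + (pd1 u p) ^ 2) * pd2 (pd2 u) p
  = 1 + (pd1 u p) ^ 2 + (pd2 u p) ^ 2

lemma hess_nonneg {Ω : Set (ℝ×ℝ)} {u : ℝ×ℝ→ℝ} (hΩ : IsOpen Ω) (hΩc : Convex ℝ Ω)
    (hu : ContDiffOn ℝ 2 u Ω) (hconv : ConvexOn ℝ Ω u) {q : ℝ×ℝ} (hq : q ∈ Ω) (v : ℝ×ℝ) :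
    0 ≤ fderiv ℝ (fderiv ℝ u) q v v := by
  set A : ℝ →ᵃ[ℝ] ℝ×ℝ := AffineMap.lineMap q (q+v) with hA
  set m : ℝ → ℝ×ℝ := fun t => q + t • v with hm
  have hAm : (A : ℝ → ℝ×ℝ) = m := by
    funext t; simp [hA, hm, AffineMap.lineMap_apply, add_comm]
  have hmc : Continuous m := continuous_const.add (continuous_id.smul continuous_const)
  set T : Set ℝ := m ⁻¹' Ω with hT
  have hTo : IsOpen T := hΩ.preimage hmc
  have h0T : (0:ℝ) ∈ T := by simp [hT, Set.mem_preimage, hm, hq]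
  have hm0 : m 0 = q := by simp [hm]
  have hφconv : ConvexOn ℝ T (u ∘ m) := by
    have := hconv.comp_affineMap A
    rwa [show A ⁻¹' Ω = T by rw [hT, ← hAm], show u ∘ A = u ∘ m by rw [hAm]] at this
  set ψ : ℝ → ℝ := fun t => fderiv ℝ u (m t) v with hψ
  have hinner : ∀ t : ℝ, HasDerivAt m v t := by
    intro t; simpa [hm] using ((hasDerivAt_id t).smul_const v).const_add q
  have hφd : ∀ t ∈ T, HasDerivAt (u ∘ m) (ψ t) t := by
    intro t ht
    have hd : DifferentiableAt ℝ u (m t) :=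
      (hu.contDiffAt (hΩ.mem_nhds ht)).differentiableAt two_ne_zero
    exact hd.hasFDerivAt.comp_hasDerivAt t (hinner t)
  have hmono : ∀ s ∈ T, ∀ t ∈ T, s < t → ψ s ≤ ψ t := by
    intro s hs t ht hst
    have h1 := hφconv.le_slope_of_hasDerivAt hs ht hst (hφd s hs)
    have h2 := hφconv.slope_le_of_hasDerivAt hs ht hst (hφd t ht)
    linarith
  have hψd : HasDerivAt ψ (fderiv ℝ (fderiv ℝ u) q v v) 0 := by
    have h1 : ContDiffAt ℝ 1 (fderiv ℝ u) q :=
      (hu.contDiffAt (hΩ.mem_nhds hq)).fderiv_right (by norm_num)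
    have houter : HasFDerivAt (fun p => fderiv ℝ u p v)
        ((ContinuousLinearMap.apply ℝ ℝ v).comp (fderiv ℝ (fderiv ℝ u) q)) q :=
      (ContinuousLinearMap.apply ℝ ℝ v).hasFDerivAt.comp q
        (h1.differentiableAt one_ne_zero).hasFDerivAt
    rw [← hm0] at houter
    have := houter.comp_hasDerivAt 0 (hinner 0)
    simp [hm0] at this
    exact this
  have hslope : Tendsto (slope ψ 0) (nhdsWithin 0 (Set.Ioi 0))
      (nhds (fderiv ℝ (fderiv ℝ u) q v v)) :=
    (hasDerivAt_iff_tendsto_slope.mp hψd).mono_left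
      (nhdsWithin_mono _ (by intro x hx; simpa using ne_of_gt hx))
  refine ge_of_tendsto hslope ?_
  have hTev : ∀ᶠ t in nhdsWithin (0:ℝ) (Set.Ioi 0), t ∈ T :=
    eventually_nhdsWithin_of_eventually_nhds (hTo.eventually_mem h0T)
  filter_upwards [hTev, self_mem_nhdsWithin] with t ht ht0
  rw [slope_def_field]
  have h1 := hmono 0 h0T t ht ht0
  have ht0' : (0:ℝ) < t := ht0
  apply div_nonneg <;> simp <;> linarith

lemma pd_pd_eq {u : ℝ×ℝ→ℝ} {q : ℝ×ℝ} (h : ContDiffAt ℝ 2 u q) (v w : ℝ×ℝ) :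
    fderiv ℝ (fun p => fderiv ℝ u p w) q v = fderiv ℝ (fderiv ℝ u) q v w := by
  have h1 : ContDiffAt ℝ 1 (fderiv ℝ u) q := h.fderiv_right (by norm_num)
  have houter : HasFDerivAt (fun p => fderiv ℝ u p w)
      ((ContinuousLinearMap.apply ℝ ℝ w).comp (fderiv ℝ (fderiv ℝ u) q)) q :=
    (ContinuousLinearMap.apply ℝ ℝ w).hasFDerivAt.comp q
      (h1.differentiableAt one_ne_zero).hasFDerivAt
  rw [houter.fderiv]; rfl

lemma bilin_expand (B : (ℝ×ℝ) →L[ℝ] (ℝ×ℝ) →L[ℝ] ℝ) (c d : ℝ) :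
    B (c, d) (c, d) = c*c*B (1,0) (1,0) + c*d*B (1,0) (0,1) + d*c*B (0,1) (1,0)
      + d*d*B (0,1) (0,1) := by
  have : ((c,d) : ℝ×ℝ) = c • ((1:ℝ),(0:ℝ)) + d • ((0:ℝ),(1:ℝ)) := by
    simp [Prod.ext_iff]
  rw [this]
  simp only [map_add, map_smul, ContinuousLinearMap.add_apply, ContinuousLinearMap.coe_smul',
    Pi.smul_apply, smul_eq_mul]
  ring

lemma key_bound {Ω : Set (ℝ×ℝ)} {u : ℝ×ℝ→ℝ} (hΩ : IsOpen Ω) (hΩc : Convex ℝ Ω)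
    (hu : ContDiffOn ℝ 2 u Ω) (hconv : ConvexOn ℝ Ω u) {q : ℝ×ℝ} (hq : q ∈ Ω)
    (hsol : IsSolitonAt u q) :
    fderiv ℝ (fderiv ℝ u) q (1,0) (1,0) ≤ 1 + (fderiv ℝ u q (1,0))^2 := by
  have hca : ContDiffAt ℝ 2 u q := hu.contDiffAt (hΩ.mem_nhds hq)
  set a1 : ℝ := fderiv ℝ u q (1,0) with ha1
  set a2 : ℝ := fderiv ℝ u q (0,1) with ha2
  set B := fderiv ℝ (fderiv ℝ u) q with hB
  have hsym : B (0,1) (1,0) = B (1,0) (0,1) := (hca.isSymmSndFDerivAt (by norm_num)) _ _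
  have hE : (1 + a2^2) * B (1,0) (1,0) - 2*a1*a2*(B (0,1) (1,0)) + (1+a1^2) * B (0,1) (0,1)
      = 1 + a1^2 + a2^2 := by
    have hs2 := hsol
    unfold IsSolitonAt at hs2
    have hpd1 : pd1 u = fun p => fderiv ℝ u p (1,0) := rfl
    have hpd2 : pd2 u = fun p => fderiv ℝ u p (0,1) := rfl
    simp only [pd1, pd2, hpd1, hpd2] at hs2
    rw [pd_pd_eq hca, pd_pd_eq hca, pd_pd_eq hca] at hs2
    exact hs2
  have hQ : 0 ≤ B (a1*a2, -(1+a1^2)) (a1*a2, -(1+a1^2)) :=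
    hess_nonneg hΩ hΩc hu hconv hq _
  rw [bilin_expand, hsym] at hQ
  have hW : (0:ℝ) < 1 + a1^2 + a2^2 := by positivity
  have hid : (1+a1^2+a2^2) * (B (1,0) (1,0)) =
      (1+a1^2)*(1+a1^2+a2^2) - (a1*a2*(a1*a2)*(B (1,0) (1,0))
        + a1*a2*(-(1+a1^2))*(B (1,0) (0,1)) + (-(1+a1^2))*(a1*a2)*(B (1,0) (0,1))
        + (-(1+a1^2))*(-(1+a1^2))*(B (0,1) (0,1))) := by
    rw [hsym] at hE
    linear_combination (1+a1^2)*hE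
  have h2 : (1+a1^2+a2^2) * (B (1,0) (1,0)) ≤ (1+a1^2+a2^2) * (1+a1^2) := by
    rw [hid]; linarith [hQ]
  exact (mul_le_mul_iff_right₀ hW).mp h2

/-- For a complete convex graphical translating soliton over the strip
`S_R = {|x₁| < R}`, the mean curvature `H = 1/√(1+|∇u|²)` satisfies `H(x₁,x₂) ≤ R − |x₁|`. -/
theorem meanCurvature_le_dist_to_boundary (R : ℝ) (hR : 0 < R) (u : ℝ × ℝ → ℝ)
    (hu : ContDiffOn ℝ 2 u {p : ℝ × ℝ | |p.1| < R})
    (hconv : ConvexOn ℝ {p : ℝ × ℝ | |p.1| < R} u)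
    (hsol : ∀ p : ℝ × ℝ, |p.1| < R → IsSolitonAt u p)
    (hcompl₁ : ∀ x₂ : ℝ,
      Tendsto (fun x₁ : ℝ => u (x₁, x₂)) (nhdsWithin R (Set.Iio R)) atTop)
    (hcompl₂ : ∀ x₂ : ℝ,
      Tendsto (fun x₁ : ℝ => u (x₁, x₂)) (nhdsWithin (-R) (Set.Ioi (-R))) atTop) :
    ∀ p : ℝ × ℝ, |p.1| < R →
      1 / Real.sqrt (1 + (pd1 u p) ^ 2 + (pd2 u p) ^ 2) ≤ R - |p.1| := by
  intro p hp
  obtain ⟨a, b⟩ := p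
  simp only at hp ⊢
  set Ω : Set (ℝ×ℝ) := {p : ℝ × ℝ | |p.1| < R} with hΩdef
  have hΩ : IsOpen Ω := isOpen_lt (continuous_fst.abs) continuous_const
  have hΩc : Convex ℝ Ω := by
    have : Ω = Prod.fst ⁻¹' Set.Ioo (-R) R := by
      ext q; simp [hΩdef, Set.mem_preimage, abs_lt, Set.mem_Ioo]
    rw [this]
    exact (convex_Ioo (-R) R).linear_preimage (LinearMap.fst ℝ ℝ ℝ)
  set S : Set ℝ := Set.Ioo (-R) R with hSdef
  have hSmem : ∀ x : ℝ, x ∈ S ↔ |x| < R := by intro x; rw [hSdef, Set.mem_Ioo, abs_lt]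
  have haS : a ∈ S := (hSmem a).2 hp
  have hmemΩ : ∀ x ∈ S, ((x, b) : ℝ×ℝ) ∈ Ω := by
    intro x hx; simpa [hΩdef] using (hSmem x).1 hx
  set f : ℝ → ℝ := fun x => u (x, b) with hfdef
  set g : ℝ → ℝ := fun x => fderiv ℝ u (x, b) (1, 0) with hgdef
  set g' : ℝ → ℝ := fun x => fderiv ℝ (fderiv ℝ u) (x, b) (1, 0) (1, 0) with hg'def
  have hline : ∀ x : ℝ, HasDerivAt (fun x : ℝ => ((x, b) : ℝ×ℝ)) ((1:ℝ), (0:ℝ)) x :=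
    fun x => (hasDerivAt_id x).prodMk (hasDerivAt_const x b)
  have hfd : ∀ x ∈ S, HasDerivAt f (g x) x := by
    intro x hx
    have hd : DifferentiableAt ℝ u (x, b) :=
      (hu.contDiffAt (hΩ.mem_nhds (hmemΩ x hx))).differentiableAt two_ne_zero
    exact hd.hasFDerivAt.comp_hasDerivAt x (hline x)
  have hgd : ∀ x ∈ S, HasDerivAt g (g' x) x := by
    intro x hx
    have h1 : ContDiffAt ℝ 1 (fderiv ℝ u) (x, b) :=
      (hu.contDiffAt (hΩ.mem_nhds (hmemΩ x hx))).fderiv_right (by norm_num)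
    have houter : HasFDerivAt (fun p => fderiv ℝ u p ((1:ℝ), (0:ℝ)))
        ((ContinuousLinearMap.apply ℝ ℝ ((1:ℝ),(0:ℝ))).comp (fderiv ℝ (fderiv ℝ u) (x, b)))
        (x, b) :=
      (ContinuousLinearMap.apply ℝ ℝ ((1:ℝ),(0:ℝ))).hasFDerivAt.comp (x,b)
        (h1.differentiableAt one_ne_zero).hasFDerivAt
    exact houter.comp_hasDerivAt x (hline x)
  have hg'le : ∀ x ∈ S, g' x ≤ 1 + (g x)^2 := by
    intro x hx
    exact key_bound hΩ hΩc hu hconv (hmemΩ x hx) (hsol (x, b) ((hSmem x).1 hx))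
  -- convexity of f on S
  have hfconv : ConvexOn ℝ S f := by
    set A : ℝ →ᵃ[ℝ] ℝ×ℝ := AffineMap.lineMap ((0:ℝ), b) ((1:ℝ), b) with hA
    have hAapp : ∀ t : ℝ, A t = (t, b) := by
      intro t
      simp [hA, AffineMap.lineMap_apply, Prod.ext_iff]
    have := hconv.comp_affineMap A
    have hset : A ⁻¹' Ω = S := by
      ext t; simp [Set.mem_preimage, hAapp t, hΩdef, hSdef, Set.mem_Ioo, abs_lt]
    have hfun : u ∘ A = f := by funext t; simp [Function.comp, hAapp t, hfdef]
    rwa [hset, hfun] at this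
  -- the arctan of the slope
  set h : ℝ → ℝ := fun x => arctan (g x) with hhdef
  have hhd : ∀ x ∈ S, HasDerivAt h (1 / (1 + g x ^ 2) * g' x) x := fun x hx => (hgd x hx).arctan
  have hlip : ∀ x ∈ S, ∀ y ∈ S, x ≤ y → h y - h x ≤ y - x := by
    have hanti : AntitoneOn (fun x => h x - x) S := by
      have hd : ∀ x ∈ S, HasDerivAt (fun x => h x - x) (1 / (1 + g x ^ 2) * g' x - 1) x :=
        fun x hx => (hhd x hx).sub (hasDerivAt_id x)
      apply antitoneOn_of_deriv_nonpos (convex_Ioo (-R) R)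
      · exact fun x hx => ((hd x hx).continuousAt).continuousWithinAt
      · intro x hx
        rw [isOpen_Ioo.interior_eq] at hx
        exact ((hd x hx).differentiableAt).differentiableWithinAt
      · intro x hx
        rw [isOpen_Ioo.interior_eq] at hx
        rw [(hd x hx).deriv]
        have h1 : (0:ℝ) < 1 + g x ^ 2 := by positivity
        have h2 := hg'le x hx
        have h3 : 1 / (1 + g x ^ 2) * g' x ≤ 1 := by
          rw [div_mul_eq_mul_div, one_mul, div_le_one h1]; linarith
        linarith
    intro x hx y hy hxy
    have := hanti hx hy hxy
    simp only [sub_le_sub_iff] at this ⊢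
    linarith [this]
  have harctan_lt : ∀ x : ℝ, h x < π/2 := fun x => arctan_lt_pi_div_two (g x)
  have harctan_gt : ∀ x : ℝ, -(π/2) < h x := fun x => neg_pi_div_two_lt_arctan (g x)
  -- g tends to +infty on the right
  have hgtop : Tendsto g (nhdsWithin R (Set.Iio R)) atTop := by
    have hIoo : Set.Ioo a R ∈ nhdsWithin R (Set.Iio R) :=
      Ioo_mem_nhdsLT_of_mem ⟨haS.2, le_refl R⟩
    have hfatop : Tendsto f (nhdsWithin R (Set.Iio R)) atTop := hcompl₁ b
    have hbase : Tendsto (fun x => (f x - f a) / (R - a)) (nhdsWithin R (Set.Iio R)) atTop := by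
      apply Tendsto.atTop_div_const (by linarith [haS.2])
      simpa [sub_eq_add_neg] using tendsto_atTop_add_const_right _ (-(f a)) hfatop
    apply tendsto_atTop_mono' _ _ hbase
    filter_upwards [hIoo, hfatop.eventually (eventually_ge_atTop (f a))] with x hx hfx
    have hxS : x ∈ S := ⟨lt_trans haS.1 hx.1, hx.2⟩
    have hslope := hfconv.slope_le_of_hasDerivAt haS hxS hx.1 (hfd x hxS)
    rw [slope_def_field] at hslope
    have h1 : (f x - f a) / (R - a) ≤ (f x - f a) / (x - a) := by
      apply div_le_div_of_nonneg_left (by linarith) (by linarith [hx.1]) (by linarith [hx.2])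
    linarith
  -- (-g) tends to +infty on the left
  have hgbot : Tendsto (fun x => -(g x)) (nhdsWithin (-R) (Set.Ioi (-R))) atTop := by
    have hIoo : Set.Ioo (-R) a ∈ nhdsWithin (-R) (Set.Ioi (-R)) :=
      Ioo_mem_nhdsGT_of_mem ⟨le_refl (-R), haS.1⟩
    have hfatop : Tendsto f (nhdsWithin (-R) (Set.Ioi (-R))) atTop := hcompl₂ b
    have hbase : Tendsto (fun x => (f x - f a) / (a + R)) (nhdsWithin (-R) (Set.Ioi (-R))) atTop := by
      apply Tendsto.atTop_div_const (by linarith [haS.1])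
      simpa [sub_eq_add_neg] using tendsto_atTop_add_const_right _ (-(f a)) hfatop
    apply tendsto_atTop_mono' _ _ hbase
    filter_upwards [hIoo, hfatop.eventually (eventually_ge_atTop (f a))] with x hx hfx
    have hxS : x ∈ S := ⟨hx.1, lt_trans hx.2 haS.2⟩
    have hslope := hfconv.le_slope_of_hasDerivAt hxS haS hx.2 (hfd x hxS)
    rw [slope_def_field] at hslope
    have h1 : (f x - f a) / (a + R) ≤ (f x - f a) / (a - x) := by
      apply div_le_div_of_nonneg_left (by linarith) (by linarith [hx.2]) (by linarith [hx.1])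
    have h2 : (f a - f x) / (a - x) = -((f x - f a) / (a - x)) := by ring
    -- hslope : g x ≤ slope f x a = (f a - f x) / (a - x)
    nlinarith [hslope, h1]
  -- right endpoint estimate
  have hright : π/2 - h a ≤ R - a := by
    by_contra hcon
    push_neg at hcon
    set K := h a + (R - a) with hK
    have hKlt : K < π/2 := by linarith
    have hKgt : -(π/2) < K := by linarith [harctan_gt a, haS.2]
    have hbound : ∀ x ∈ Set.Ioo a R, g x ≤ Real.tan K := by
      intro x hx
      have hxS : x ∈ S := ⟨lt_trans haS.1 hx.1, hx.2⟩
      have h1 : h x ≤ K := by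
        have := hlip a haS x hxS hx.1.le
        have := hx.2
        simp only [hK]
        linarith
      have h2 : g x = Real.tan (h x) := (Real.tan_arctan (g x)).symm
      rw [h2]
      exact Real.strictMonoOn_tan.monotoneOn ⟨harctan_gt x, harctan_lt x⟩ ⟨hKgt, hKlt⟩ h1
    have hev1 := hgtop.eventually (eventually_gt_atTop (Real.tan K))
    have hev2 : ∀ᶠ x in nhdsWithin R (Set.Iio R), x ∈ Set.Ioo a R :=
      Ioo_mem_nhdsLT_of_mem ⟨haS.2, le_refl R⟩
    obtain ⟨x, hx1, hx2⟩ := (hev1.and hev2).exists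
    exact absurd (hbound x hx2) (not_le.mpr hx1)
  -- left endpoint estimate
  have hleft : h a + π/2 ≤ a + R := by
    by_contra hcon
    push_neg at hcon
    set K := h a - (a + R) with hK
    have hKgt : -(π/2) < K := by linarith
    have hKlt : K < π/2 := by linarith [harctan_lt a, haS.1]
    have hbound : ∀ x ∈ Set.Ioo (-R) a, -(g x) ≤ Real.tan (-K) := by
      intro x hx
      have hxS : x ∈ S := ⟨hx.1, lt_trans hx.2 haS.2⟩
      have h1 : K ≤ h x := by
        have := hlip x hxS a haS hx.2.le
        have := hx.1
        simp only [hK]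
        linarith
      have h2 : -(g x) = Real.tan (-(h x)) := by
        rw [Real.tan_neg, Real.tan_arctan]
      rw [h2]
      exact Real.strictMonoOn_tan.monotoneOn
        ⟨by linarith [harctan_lt x], by linarith [harctan_gt x]⟩
        ⟨by linarith, by linarith⟩ (by linarith)
    have hev1 := hgbot.eventually (eventually_gt_atTop (Real.tan (-K)))
    have hev2 : ∀ᶠ x in nhdsWithin (-R) (Set.Ioi (-R)), x ∈ Set.Ioo (-R) a :=
      Ioo_mem_nhdsGT_of_mem ⟨le_refl (-R), haS.1⟩
    obtain ⟨x, hx1, hx2⟩ := (hev1.and hev2).exists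
    exact absurd (hbound x hx2) (not_le.mpr hx1)
  -- final numeric part
  have hπ : (1:ℝ) < π/2 := by linarith [Real.pi_gt_three]
  have hgoal : 1 / Real.sqrt (1 + (pd1 u (a, b)) ^ 2 + (pd2 u (a, b)) ^ 2) ≤ R - |a| := by
    have hpd1g : pd1 u (a, b) = g a := rfl
    set X : ℝ := 1 + (pd1 u (a, b)) ^ 2 + (pd2 u (a, b)) ^ 2 with hX
    have hX1 : (1:ℝ) ≤ X := by
      rw [hX]; nlinarith [sq_nonneg (pd1 u (a,b)), sq_nonneg (pd2 u (a,b))]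
    have hXpos : (0:ℝ) < X := by linarith
    have hsqX1 : (1:ℝ) ≤ Real.sqrt X := by
      rw [show (1:ℝ) = Real.sqrt 1 by simp]
      exact Real.sqrt_le_sqrt hX1
    have hsqXpos : 0 < Real.sqrt X := by linarith
    by_cases hcase : 1 ≤ R - |a|
    · calc 1 / Real.sqrt X ≤ 1 := by rw [div_le_one hsqXpos]; exact hsqX1
        _ ≤ R - |a| := hcase
    · push_neg at hcase
      set d : ℝ := R - |a| with hd
      have hd0 : 0 < d := by rw [hd]; linarith [hp]
      have hd2 : d < π/2 := lt_trans hcase hπ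
      have hsin : 0 < Real.sin d := Real.sin_pos_of_pos_of_lt_pi hd0 (by linarith [Real.pi_gt_three])
      have hcos : 0 ≤ Real.cos d := Real.cos_nonneg_of_mem_Icc ⟨by linarith, hd2.le⟩
      have hcotnn : 0 ≤ Real.cos d / Real.sin d := div_nonneg hcos hsin.le
      have htanval : Real.tan (π/2 - d) = Real.cos d / Real.sin d := by
        rw [Real.tan_pi_div_two_sub, Real.tan_eq_sin_div_cos, inv_div]
      have hkey : (Real.cos d / Real.sin d)^2 ≤ (g a)^2 := by
        rcases le_or_gt 0 a with ha0 | ha0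
        · have habs : |a| = a := abs_of_nonneg ha0
          have h1 : Real.tan (π/2 - d) ≤ Real.tan (h a) := by
            apply Real.strictMonoOn_tan.monotoneOn
              ⟨by linarith, by linarith⟩ ⟨harctan_gt a, harctan_lt a⟩
            rw [hd, habs]; linarith [hright]
          rw [htanval, Real.tan_arctan] at h1
          exact pow_le_pow_left₀ hcotnn h1 2
        · have habs : |a| = -a := abs_of_neg ha0
          have h1 : Real.tan (π/2 - d) ≤ Real.tan (-(h a)) := by
            apply Real.strictMonoOn_tan.monotoneOn
              ⟨by linarith, by linarith⟩
              ⟨by linarith [harctan_lt a], by linarith [harctan_gt a]⟩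
            rw [hd, habs]; linarith [hleft]
          rw [htanval, Real.tan_neg, Real.tan_arctan] at h1
          have := pow_le_pow_left₀ hcotnn h1 2
          rwa [neg_sq] at this
      have hXge : (1 / Real.sin d)^2 ≤ X := by
        have hid : (1 / Real.sin d)^2 = 1 + (Real.cos d / Real.sin d)^2 := by
          field_simp
          rw [Real.sin_sq_add_cos_sq]
        rw [hid, hX, hpd1g]
        nlinarith [sq_nonneg (pd2 u (a,b)), hkey]
      have hsX : 1 / Real.sin d ≤ Real.sqrt X := by
        have h1 := Real.sqrt_le_sqrt hXge
        rwa [Real.sqrt_sq (by positivity)] at h1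
      have h5 : 1 / Real.sqrt X ≤ Real.sin d := by
        rw [div_le_iff₀ hsqXpos]
        calc (1:ℝ) = Real.sin d * (1 / Real.sin d) := by field_simp
          _ ≤ Real.sin d * Real.sqrt X := by
              exact mul_le_mul_of_nonneg_left hsX hsin.le
      have h6 : Real.sin d < d := Real.sin_lt hd0
      linarith
  exact hgoal
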